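/- Let q, t be nonzero complex numbers and m ≥ 1, and assume q^{2k} ≠ 1 for all k with 1 ≤ k ≤ m and t² ≠ q^{2k} for all integers k with −m ≤ k ≤ m. Define the coefficients γ_ε(q,t) with respect to the q-string ξ_{ij} = q^{i−j}. Then for every n with 0 ≤ n ≤ m, the coefficient of the sign vector (−,…,−,+,…,+) with exactly n leading minus signs equals γ_{m,n}(q,t) := ∏_{k=1}^{n} [ (q^k t^{−1} − q^{−k} t)(q^{m−k+1} − q^{−(m−k+1)}) ] / [ (q^k − q^{−k})(q^{m−k+1} t^{−1} − q^{−(m−k+1)} t) ]. (This is formula (3.26) of the paper for the coefficients of the sl_2 generator T_m(z) associated to a q-string of length m.) -/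

import Mathlib

open Finset

/-- `η^{(+,+)}(q,t;ξ)`. -/
noncomputable def etaPP (q t ξ : ℂ) : ℂ := (q * ξ⁻¹ - q⁻¹ * ξ) / (ξ⁻¹ - ξ)

/-- `η^{(-,+)}(q,t;ξ)`. -/
noncomputable def etaMP (q t ξ : ℂ) : ℂ :=
  (q * t⁻¹ * ξ⁻¹ - q⁻¹ * t * ξ) / (t⁻¹ * ξ⁻¹ - t * ξ)

/-- The coefficients `γ_ε(q,t)` of Theorem 3.1 of the paper for the `q`-string
`ξ_{ij} = q^{i-j}`; `true` encodes sign `+1` and `false` encodes sign `-1`. -/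
noncomputable def gammaString (m : ℕ) (q t : ℂ) (ε : Fin m → Bool) : ℂ :=
  ∏ i ∈ univ.filter (fun i => ε i = false), ∏ j ∈ univ.filter (fun j => ε j = true),
    etaPP q t (q ^ ((i : ℤ) - (j : ℤ))) / etaMP q t (q ^ ((i : ℤ) - (j : ℤ)))

/-- The explicit coefficients `γ_{m,n}(q,t)` of formula (3.26) of the paper:
`γ_{m,n} = ∏_{k=1}^{n} ((q^k t⁻¹ - q^{-k} t)(q^{m-k+1} - q^{-(m-k+1)})) /
((q^k - q^{-k})(q^{m-k+1} t⁻¹ - q^{-(m-k+1)} t))`. -/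
noncomputable def gammaMN (m n : ℕ) (q t : ℂ) : ℂ :=
  ∏ k ∈ Finset.range n,
    ((q ^ (k + 1) * t⁻¹ - q⁻¹ ^ (k + 1) * t) * (q ^ (m - k) - q⁻¹ ^ (m - k))) /
    ((q ^ (k + 1) - q⁻¹ ^ (k + 1)) * (q ^ (m - k) * t⁻¹ - q⁻¹ ^ (m - k) * t))

/-- Auxiliary: the single-site ratio `h(a) = f(a)/g(a)` with `f(a)=q^a-q^{-a}`,
`g(a)=q^a t⁻¹ - q^{-a} t`. -/
noncomputable def hfun (q t : ℂ) (a : ℤ) : ℂ :=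
  (q ^ a - q ^ (-a)) / (q ^ a * t⁻¹ - q ^ (-a) * t)

lemma eta_ratio (q t : ℂ) (hq : q ≠ 0) (a : ℤ) :
    etaPP q t (q ^ (-a)) / etaMP q t (q ^ (-a)) = hfun q t (a + 1) / hfun q t a := by
  unfold etaPP etaMP hfun
  rw [zpow_neg q a, inv_inv]
  rw [zpow_add₀ hq a 1, zpow_one, neg_add, zpow_add₀ hq (-a) (-1), zpow_neg q a,
    zpow_neg_one]
  simp only [div_eq_mul_inv, mul_inv, inv_inv]
  ring

lemma fne (q : ℂ) (hq : q ≠ 0) (m : ℕ)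
    (hq' : ∀ k : ℕ, 1 ≤ k → k ≤ m → q ^ (2 * k) ≠ 1)
    (a : ℤ) (h1 : 1 ≤ a) (h2 : a ≤ (m : ℤ)) : q ^ a - q ^ (-a) ≠ 0 := by
  intro h
  have hz : q ^ a = q ^ (-a) := sub_eq_zero.mp h
  have h2a : q ^ (2 * a) = 1 := by
    rw [two_mul, zpow_add₀ hq]
    nth_rewrite 1 [hz]
    rw [← zpow_add₀ hq, neg_add_cancel, zpow_zero]
  set k := a.toNat with hk
  have hka : (k : ℤ) = a := Int.toNat_of_nonneg (by omega)
  have : q ^ (2 * k) = 1 := by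
    have : q ^ ((2 * k : ℕ) : ℤ) = 1 := by
      rw [show ((2 * k : ℕ) : ℤ) = 2 * a by push_cast; omega]; exact h2a
    rwa [zpow_natCast] at this
  exact hq' k (by omega) (by omega) this

lemma gne (q t : ℂ) (hq : q ≠ 0) (ht : t ≠ 0) (m : ℕ)
    (ht' : ∀ k : ℤ, -(m : ℤ) ≤ k → k ≤ (m : ℤ) → t ^ 2 ≠ q ^ (2 * k))
    (a : ℤ) (h1 : -(m : ℤ) ≤ a) (h2 : a ≤ (m : ℤ)) :
    q ^ a * t⁻¹ - q ^ (-a) * t ≠ 0 := by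
  intro h
  have hz : q ^ a * t⁻¹ = q ^ (-a) * t := sub_eq_zero.mp h
  have hqa : (q : ℂ) ^ a ≠ 0 := zpow_ne_zero a hq
  have key : t ^ 2 = q ^ (2 * a) := by
    have e1 : q ^ (2 * a) = (q ^ a * t⁻¹) * (q ^ a * t) := by
      rw [two_mul, zpow_add₀ hq]; field_simp
    rw [e1, hz]
    rw [show (q ^ (-a) * t) * (q ^ a * t) = (q ^ (-a) * q ^ a) * t ^ 2 by ring,
      ← zpow_add₀ hq, neg_add_cancel, zpow_zero, one_mul]
  exact ht' a h1 h2 key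

lemma hfun_ne (q t : ℂ) (hq : q ≠ 0) (ht : t ≠ 0) (m : ℕ)
    (hq' : ∀ k : ℕ, 1 ≤ k → k ≤ m → q ^ (2 * k) ≠ 1)
    (ht' : ∀ k : ℤ, -(m : ℤ) ≤ k → k ≤ (m : ℤ) → t ^ 2 ≠ q ^ (2 * k))
    (a : ℤ) (h1 : 1 ≤ a) (h2 : a ≤ (m : ℤ)) : hfun q t a ≠ 0 :=
  div_ne_zero (fne q hq m hq' a h1 h2) (gne q t hq ht m ht' a (by omega) h2)

lemma tel (H : ℕ → ℂ) (n : ℕ) : ∀ m, n ≤ m → (∀ j, n ≤ j → j ≤ m → H j ≠ 0) →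
    ∏ j ∈ Ico n m, (H (j + 1) / H j) = H m / H n := by
  intro m
  induction m with
  | zero => intro h h0; interval_cases n; simp [div_self (h0 0 le_rfl le_rfl)]
  | succ m ih =>
    intro h h0
    rcases Nat.lt_or_ge n (m + 1) with hlt | hge
    · have hnm : n ≤ m := by omega
      rw [Finset.prod_Ico_succ_top hnm, ih hnm (fun j hj hj' => h0 j hj (by omega))]
      have h1 : H m ≠ 0 := h0 m hnm (by omega)
      have h2 : H n ≠ 0 := h0 n le_rfl (by omega)
      field_simp
    · have : n = m + 1 := by omega
      subst this
      simp [div_self (h0 (m + 1) le_rfl le_rfl)]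

lemma gammaMN_term (q t : ℂ) (m k : ℕ) (hk : k < m) :
    ((q ^ (k + 1) * t⁻¹ - q⁻¹ ^ (k + 1) * t) * (q ^ (m - k) - q⁻¹ ^ (m - k))) /
    ((q ^ (k + 1) - q⁻¹ ^ (k + 1)) * (q ^ (m - k) * t⁻¹ - q⁻¹ ^ (m - k) * t))
    = hfun q t ((m : ℤ) - (k : ℤ)) / hfun q t ((k : ℤ) + 1) := by
  have e1 : (q : ℂ) ^ (k + 1) = q ^ ((k : ℤ) + 1) := by
    rw [show ((k : ℤ) + 1) = ((k + 1 : ℕ) : ℤ) by push_cast; ring, zpow_natCast]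
  have e2 : (q⁻¹ : ℂ) ^ (k + 1) = q ^ (-((k : ℤ) + 1)) := by
    rw [inv_pow, ← zpow_natCast, ← zpow_neg]; norm_cast
  have e3 : (q : ℂ) ^ (m - k) = q ^ ((m : ℤ) - (k : ℤ)) := by
    rw [← zpow_natCast]; congr 1; omega
  have e4 : (q⁻¹ : ℂ) ^ (m - k) = q ^ (-((m : ℤ) - (k : ℤ))) := by
    rw [inv_pow, ← zpow_natCast, ← zpow_neg]; congr 1; omega
  rw [e1, e2, e3, e4]
  unfold hfun
  simp only [div_eq_mul_inv, mul_inv, inv_inv]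
  ring

lemma fin_prod_true_aux (m n : ℕ) (f : ℕ → ℂ) :
    ∏ j ∈ univ.filter (fun j : Fin m => decide (n ≤ (j : ℕ)) = true), f (j : ℕ)
      = ∏ j ∈ Ico n m, f j := by
  rw [Finset.prod_filter,
    Fin.prod_univ_eq_prod_range (fun j => if decide (n ≤ j) = true then f j else 1) m,
    ← Finset.prod_filter]
  congr 1
  ext j
  simp only [mem_filter, mem_range, mem_Ico, decide_eq_true_eq]
  omega

lemma fin_prod_false_aux (m n : ℕ) (hn : n ≤ m) (f : ℕ → ℂ) :
    ∏ i ∈ univ.filter (fun i : Fin m => decide (n ≤ (i : ℕ)) = false), f (i : ℕ)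
      = ∏ i ∈ range n, f i := by
  rw [Finset.prod_filter,
    Fin.prod_univ_eq_prod_range (fun i => if decide (n ≤ i) = false then f i else 1) m,
    ← Finset.prod_filter]
  congr 1
  ext i
  simp only [mem_filter, mem_range, decide_eq_false_iff_not, Nat.not_le]
  omega

/-- Formula (3.26) of the paper: for a `q`-string of length `m`, the coefficient of the
sign vector `(-,…,-,+,…,+)` with exactly `n` leading minus signs equals `γ_{m,n}(q,t)`. -/
theorem stmt4 (q t : ℂ) (hq : q ≠ 0) (ht : t ≠ 0) (m : ℕ) (hm : 1 ≤ m)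
    (hq' : ∀ k : ℕ, 1 ≤ k → k ≤ m → q ^ (2 * k) ≠ 1)
    (ht' : ∀ k : ℤ, -(m : ℤ) ≤ k → k ≤ (m : ℤ) → t ^ 2 ≠ q ^ (2 * k))
    (n : ℕ) (hn : n ≤ m) :
    gammaString m q t (fun i => decide (n ≤ (i : ℕ))) = gammaMN m n q t := by
  have step1 : gammaString m q t (fun i => decide (n ≤ (i : ℕ))) =
      ∏ i ∈ range n, ∏ j ∈ Ico n m,
        etaPP q t (q ^ ((i : ℤ) - (j : ℤ))) / etaMP q t (q ^ ((i : ℤ) - (j : ℤ))) := by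
    rw [gammaString]
    rw [fin_prod_false_aux m n hn (fun i => ∏ j ∈ univ.filter
        (fun j : Fin m => decide (n ≤ (j : ℕ)) = true),
        etaPP q t (q ^ ((i : ℤ) - ((j : ℕ) : ℤ))) /
          etaMP q t (q ^ ((i : ℤ) - ((j : ℕ) : ℤ))))]
    refine Finset.prod_congr rfl (fun i _ => ?_)
    exact fin_prod_true_aux m n (fun j =>
      etaPP q t (q ^ ((i : ℤ) - (j : ℤ))) / etaMP q t (q ^ ((i : ℤ) - (j : ℤ))))
  have step2 : ∀ i ∈ range n,
      (∏ j ∈ Ico n m,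
        etaPP q t (q ^ ((i : ℤ) - (j : ℤ))) / etaMP q t (q ^ ((i : ℤ) - (j : ℤ))))
      = hfun q t ((m : ℤ) - (i : ℤ)) / hfun q t ((n : ℤ) - (i : ℤ)) := by
    intro i hi
    have hi' : i < n := mem_range.mp hi
    have key : ∏ j ∈ Ico n m,
        etaPP q t (q ^ ((i : ℤ) - (j : ℤ))) / etaMP q t (q ^ ((i : ℤ) - (j : ℤ)))
        = ∏ j ∈ Ico n m, ((fun j : ℕ => hfun q t ((j : ℤ) - (i : ℤ))) (j + 1) /
            (fun j : ℕ => hfun q t ((j : ℤ) - (i : ℤ))) j) := by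
      refine Finset.prod_congr rfl (fun j hj => ?_)
      simp only
      rw [show ((i : ℤ) - (j : ℤ)) = -((j : ℤ) - (i : ℤ)) by ring,
        eta_ratio q t hq ((j : ℤ) - (i : ℤ))]
      congr 2
      push_cast
      ring
    rw [key, tel (fun j : ℕ => hfun q t ((j : ℤ) - (i : ℤ))) n m hn ?_]
    intro j hj1 hj2
    exact hfun_ne q t hq ht m hq' ht' ((j : ℤ) - (i : ℤ)) (by omega) (by omega)
  rw [step1, Finset.prod_congr rfl step2]
  have rhs : gammaMN m n q t = ∏ k ∈ range n,
      hfun q t ((m : ℤ) - (k : ℤ)) / hfun q t ((k : ℤ) + 1) := by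
    rw [gammaMN]
    refine Finset.prod_congr rfl (fun k hk => ?_)
    exact gammaMN_term q t m k (by have := mem_range.mp hk; omega)
  rw [rhs, Finset.prod_div_distrib, Finset.prod_div_distrib]
  congr 1
  have hrefl := Finset.prod_range_reflect (fun k => hfun q t ((k : ℤ) + 1)) n
  rw [← hrefl]
  refine Finset.prod_congr rfl (fun j hj => ?_)
  have hj' : j < n := mem_range.mp hj
  congr 1
  omega
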